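/- Let z be a nonzero real number, let a be a real number that is not a nonpositive integer, and let d ≥ 1 be an integer. Let c(d) be the d-th iterated derivative at 0 of g_{a,z}(x) = exp(1/z − a·x − (1/z)·e^{−x}). Then there exists a polynomial q with real coefficients such that for every integer n ≥ 0, ∑_{k=0}^{n−1} (k^d − c(d))·z^k·a^{(k)} = q(n)·z^n·a^{(n)} − q(0). -/

import Mathlib

noncomputable def gg (z a : ℝ) : ℝ → ℝ := fun x => Real.exp (1 / z - a * x - 1 / z * Real.exp (-x))

lemma gg_contDiff (z a : ℝ) : ContDiff ℝ (⊤ : ℕ∞) (gg z a) := by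
  unfold gg; fun_prop

lemma gg_hasDerivAt (z a x : ℝ) :
    HasDerivAt (gg z a) ((-a + Real.exp (-x) / z) * gg z a x) x := by
  have h1 : HasDerivAt (fun x : ℝ => 1 / z - a * x - 1 / z * Real.exp (-x))
      (-a + Real.exp (-x) / z) x := by
    have he : HasDerivAt (fun x : ℝ => Real.exp (-x)) (Real.exp (-x) * (-1)) x :=
      ((hasDerivAt_id x).neg).exp
    have := ((hasDerivAt_const x (1/z)).sub ((hasDerivAt_id x).const_mul a)).sub
      (he.const_mul (1/z))
    exact this.congr_deriv (by ring)
  have := h1.exp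
  exact this.congr_deriv (by unfold gg; ring)

noncomputable def ww (z a : ℝ) : ℝ → ℝ := fun x => Real.exp x * gg z a x

lemma ww_contDiff (z a : ℝ) : ContDiff ℝ (⊤ : ℕ∞) (ww z a) :=
  Real.contDiff_exp.mul (gg_contDiff z a)

lemma deriv_ww (z a : ℝ) (hz : z ≠ 0) (x : ℝ) :
    deriv (ww z a) x = gg z a x / z - (a - 1) * ww z a x := by
  have h : HasDerivAt (ww z a)
      (Real.exp x * gg z a x + Real.exp x * ((-a + Real.exp (-x) / z) * gg z a x)) x :=
    (Real.hasDerivAt_exp x).mul (gg_hasDerivAt z a x)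
  rw [h.deriv]
  unfold ww
  have hex : Real.exp x * Real.exp (-x) = 1 := by
    rw [← Real.exp_add]; simp
  field_simp
  linear_combination gg z a x * hex

lemma itd_add {f h : ℝ → ℝ} (hf : ContDiff ℝ (⊤ : ℕ∞) f) (hh : ContDiff ℝ (⊤ : ℕ∞) h) (n : ℕ) (x : ℝ) :
    iteratedDeriv n (fun y => f y + h y) x = iteratedDeriv n f x + iteratedDeriv n h x := by
  rw [← iteratedDerivWithin_univ, ← iteratedDerivWithin_univ, ← iteratedDerivWithin_univ]
  exact iteratedDerivWithin_add (Set.mem_univ x) uniqueDiffOn_univ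
    (hf.contDiffWithinAt.of_le (by exact_mod_cast le_top)) (hh.contDiffWithinAt.of_le (by exact_mod_cast le_top))

lemma itd_cmul {f : ℝ → ℝ} (hf : ContDiff ℝ (⊤ : ℕ∞) f) (c : ℝ) (n : ℕ) (x : ℝ) :
    iteratedDeriv n (fun y => c * f y) x = c * iteratedDeriv n f x := by
  rw [← iteratedDerivWithin_univ, ← iteratedDerivWithin_univ]
  exact iteratedDerivWithin_const_mul (Set.mem_univ x) uniqueDiffOn_univ c
    (hf.contDiffWithinAt.of_le (by exact_mod_cast le_top))

lemma pascal_sum (u : ℕ → ℝ) (m : ℕ) :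
    ∑ i ∈ Finset.range (m+2), (((m+1).choose i : ℕ) : ℝ) * u i =
      ∑ i ∈ Finset.range (m+1), ((m.choose i : ℕ) : ℝ) * u i +
      ∑ i ∈ Finset.range (m+1), ((m.choose i : ℕ) : ℝ) * u (i+1) := by
  rw [Finset.sum_range_succ' _ (m+1)]
  have h1 : ∀ i, (((m+1).choose (i+1) : ℕ) : ℝ) = (m.choose i : ℝ) + (m.choose (i+1) : ℝ) := by
    intro i; rw [Nat.choose_succ_succ]; push_cast; ring
  simp only [h1, add_mul, Finset.sum_add_distrib]
  rw [Finset.sum_range_succ' (fun i => ((m.choose i : ℕ) : ℝ) * u i) m]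
  rw [Finset.sum_range_succ (fun i => ((m.choose (i+1) : ℕ) : ℝ) * u (i+1)) m]
  simp [Nat.choose_succ_self]
  ring

lemma itd_hasDerivAt {f : ℝ → ℝ} (hf : ContDiff ℝ (⊤ : ℕ∞) f) (i : ℕ) (x : ℝ) :
    HasDerivAt (iteratedDeriv i f) (iteratedDeriv (i+1) f x) x := by
  have hd : Differentiable ℝ (iteratedDeriv i f) :=
    hf.differentiable_iteratedDeriv i (by exact_mod_cast WithTop.coe_lt_top _)
  rw [iteratedDeriv_succ]
  exact (hd x).hasDerivAt

lemma leibniz (z a : ℝ) (m : ℕ) (x : ℝ) :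
    iteratedDeriv m (ww z a) x =
      Real.exp x * ∑ i ∈ Finset.range (m+1), ((m.choose i : ℕ) : ℝ) * iteratedDeriv i (gg z a) x := by
  induction m generalizing x with
  | zero => simp [ww]
  | succ m ih =>
    rw [iteratedDeriv_succ]
    have hfun : iteratedDeriv m (ww z a) = fun y =>
        Real.exp y * ∑ i ∈ Finset.range (m+1), ((m.choose i : ℕ) : ℝ) * iteratedDeriv i (gg z a) y :=
      funext ih
    rw [hfun]
    have hS : HasDerivAt (fun y => ∑ i ∈ Finset.range (m+1),
        ((m.choose i : ℕ) : ℝ) * iteratedDeriv i (gg z a) y)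
        (∑ i ∈ Finset.range (m+1), ((m.choose i : ℕ) : ℝ) * iteratedDeriv (i+1) (gg z a) x) x := by
      apply HasDerivAt.fun_sum
      intro i _
      exact (itd_hasDerivAt (gg_contDiff z a) i x).const_mul _
    have hW := (Real.hasDerivAt_exp x).fun_mul hS
    rw [hW.deriv]
    rw [pascal_sum (fun i => iteratedDeriv i (gg z a) x) m]
    ring

noncomputable def GG (z a : ℝ) (m : ℕ) : ℝ := iteratedDeriv m (gg z a) 0

noncomputable def AA (z a : ℝ) (m : ℕ) : ℝ :=
  ∑ i ∈ Finset.range (m+1), ((m.choose i : ℕ) : ℝ) * GG z a i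

lemma AA_eq (z a : ℝ) (m : ℕ) : AA z a m = iteratedDeriv m (ww z a) 0 := by
  rw [leibniz]; simp [AA, GG]

lemma GG_zero (z a : ℝ) : GG z a 0 = 1 := by
  simp [GG, gg]

lemma key_rec (z a : ℝ) (hz : z ≠ 0) (m : ℕ) :
    AA z a (m+1) + (a - 1) * AA z a m = GG z a m / z := by
  rw [AA_eq, AA_eq]
  have hgfun : (fun x => gg z a x / z) =
      fun x => deriv (ww z a) x + (a - 1) * ww z a x := by
    funext x
    rw [deriv_ww z a hz x]; ring
  have hdw : ContDiff ℝ (⊤ : ℕ∞) (deriv (ww z a)) :=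
    (contDiff_infty_iff_deriv.mp (ww_contDiff z a)).2
  have h1 : iteratedDeriv m (fun x => gg z a x / z) 0 =
      iteratedDeriv (m+1) (ww z a) 0 + (a - 1) * iteratedDeriv m (ww z a) 0 := by
    have hcm : ContDiff ℝ (⊤ : ℕ∞) (fun y => (a - 1) * ww z a y) := by
      have := ww_contDiff z a; fun_prop
    rw [hgfun, itd_add hdw hcm m 0]
    rw [itd_cmul (ww_contDiff z a) (a-1) m 0, iteratedDeriv_succ']
  have h2 : iteratedDeriv m (fun x => gg z a x / z) 0 = GG z a m / z := by
    have : (fun x => gg z a x / z) = fun x => (1/z) * gg z a x := by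
      funext x; ring
    rw [this, itd_cmul (gg_contDiff z a) (1/z) m 0, GG]
    ring
  rw [← h1, h2]

open Polynomial

noncomputable def Tl (z a : ℝ) : Polynomial ℝ →ₗ[ℝ] Polynomial ℝ where
  toFun q := C z * (C a + X) * (q.comp (X + 1)) - q
  map_add' u v := by simp [add_comp, mul_add]; ring
  map_smul' c u := by simp [smul_comp, smul_sub, mul_smul_comm]

lemma Tl_apply (z a : ℝ) (q : Polynomial ℝ) :
    Tl z a q = C z * (C a + X) * (q.comp (X + 1)) - q := rfl

lemma binom_expand (n : ℕ) :
    ((X + 1 : Polynomial ℝ))^n = ∑ i ∈ Finset.range (n+1), C ((n.choose i : ℕ) : ℝ) * X^i := by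
  rw [add_pow]
  apply Finset.sum_congr rfl
  intro i _
  rw [one_pow, mul_one, mul_comm, Polynomial.C_eq_natCast]

lemma poly_main (z a : ℝ) (hz : z ≠ 0) (m : ℕ) :
    ∃ q : Polynomial ℝ, Tl z a q = X ^ m - C (GG z a m) := by
  induction m using Nat.strong_induction_on with
  | _ m ih =>
  match m with
  | 0 =>
    refine ⟨0, ?_⟩
    simp [GG_zero, Tl_apply]
  | (k+1) =>
    have H : ∀ i : ℕ, ∃ q : Polynomial ℝ, i < k + 1 → Tl z a q = X ^ i - C (GG z a i) :=
      fun i => if h : i < k + 1 then ⟨(ih i h).choose, fun _ => (ih i h).choose_spec⟩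
        else ⟨0, fun h' => absurd h' h⟩
    choose Q hQ using H
    set β : ℕ → ℝ := fun i =>
      (((k+1).choose i : ℕ) : ℝ) + (a - 1) * ((k.choose i : ℕ) : ℝ)
        - (if i = k then 1/z else 0) with hβ
    refine ⟨(1/z) • (X ^ k : Polynomial ℝ) - ∑ i ∈ Finset.range (k+1), β i • Q i, ?_⟩
    rw [map_sub, map_smul, map_sum]
    have hQs : ∀ i ∈ Finset.range (k+1), Tl z a (β i • Q i) = β i • (X ^ i - C (GG z a i)) := by
      intro i hi
      rw [map_smul, hQ i (Finset.mem_range.mp hi)]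
    rw [Finset.sum_congr rfl hQs]
    have hsplit : ∑ i ∈ Finset.range (k+1), β i • ((X:Polynomial ℝ) ^ i - C (GG z a i)) =
        (∑ i ∈ Finset.range (k+1), β i • (X:Polynomial ℝ) ^ i)
          - C (∑ i ∈ Finset.range (k+1), β i * GG z a i) := by
      rw [map_sum, ← Finset.sum_sub_distrib]
      apply Finset.sum_congr rfl
      intro i _
      rw [smul_sub, smul_eq_C_mul, smul_eq_C_mul, ← C_mul]
    rw [hsplit]
    -- key analytic identity
    have hkey : ∑ i ∈ Finset.range (k+1), β i * GG z a i = - GG z a (k+1) := by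
      have hterm : ∀ i ∈ Finset.range (k+1), β i * GG z a i =
          (((k+1).choose i : ℕ) : ℝ) * GG z a i
            + (a-1) * (((k.choose i : ℕ) : ℝ) * GG z a i)
            - (if i = k then (1/z) * GG z a i else 0) := by
        intro i _
        rw [hβ]
        by_cases h : i = k <;> simp [h] <;> ring
      rw [Finset.sum_congr rfl hterm, Finset.sum_sub_distrib, Finset.sum_add_distrib,
        ← Finset.mul_sum, Finset.sum_ite_eq' (Finset.range (k+1)) k
          (fun i => (1/z) * GG z a i)]
      have h2 : AA z a (k+1) =
          (∑ i ∈ Finset.range (k+1), (((k+1).choose i : ℕ) : ℝ) * GG z a i)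
            + GG z a (k+1) := by
        rw [AA, Finset.sum_range_succ (fun i => (((k+1).choose i : ℕ) : ℝ) * GG z a i) (k+1)]
        simp
      have h3 : ∑ i ∈ Finset.range (k+1), ((k.choose i : ℕ) : ℝ) * GG z a i = AA z a k := rfl
      have hrec := key_rec z a hz k
      rw [h3]
      simp only [Finset.self_mem_range_succ, if_true]
      have : (∑ i ∈ Finset.range (k+1), (((k+1).choose i : ℕ) : ℝ) * GG z a i)
          = AA z a (k+1) - GG z a (k+1) := by rw [h2]; ring
      rw [this]
      field_simp at hrec ⊢
      linarith [hrec]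
    rw [hkey]
    -- polynomial identity part
    have hCa : (C a + X : Polynomial ℝ) = (X + 1) + C (a - 1) := by
      rw [map_sub, C_1]; ring
    have hCz : C (1/z) * C z = (1 : Polynomial ℝ) := by
      rw [← C_mul, one_div, inv_mul_cancel₀ hz, C_1]
    have hTX : (1/z) • Tl z a ((X:Polynomial ℝ)^k) =
        (X+1)^(k+1) + C (a-1) * (X+1)^k - C (1/z) * X^k := by
      rw [Tl_apply, pow_comp, X_comp]
      rw [smul_sub, smul_eq_C_mul, smul_eq_C_mul, hCa]
      linear_combination (((X + 1 : Polynomial ℝ))^k * ((X+1) + C (a-1))) * hCz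
    rw [hTX]
    have hite : (∑ i ∈ Finset.range (k+1), C (if i = k then (1/z:ℝ) else 0) * X^i : Polynomial ℝ)
        = C (1/z) * X^k := by
      have hterm : ∀ i ∈ Finset.range (k+1),
          C (if i = k then (1/z:ℝ) else 0) * X^i = if i = k then C (1/z:ℝ) * X^i else 0 := by
        intro i _
        split_ifs <;> simp
      rw [Finset.sum_congr rfl hterm,
        Finset.sum_ite_eq' (Finset.range (k+1)) k (fun i => C (1/z:ℝ) * X^i)]
      simp
    have hfin : (X+1:Polynomial ℝ)^(k+1) + C (a-1) * (X+1)^k - C (1/z) * X^k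
        - ∑ i ∈ Finset.range (k+1), β i • (X:Polynomial ℝ)^i = X^(k+1) := by
      rw [binom_expand (k+1), binom_expand k, ← hite]
      rw [Finset.sum_range_succ (fun i => C ((((k+1)).choose i : ℕ) : ℝ) * X^i) (k+1)]
      simp only [Nat.choose_self, Nat.cast_one, map_one, one_mul]
      rw [Finset.mul_sum]
      have hterm : ∀ i ∈ Finset.range (k+1),
          C (((k+1).choose i : ℕ) : ℝ) * X^i
            + C (a-1) * (C ((k.choose i : ℕ) : ℝ) * X^i)
            - C (if i = k then (1/z:ℝ) else 0) * X^i - β i • (X:Polynomial ℝ)^i = 0 := by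
        intro i _
        rw [smul_eq_C_mul, hβ]
        simp only [map_add, map_sub, map_mul]
        ring
      have := Finset.sum_eq_zero hterm
      rw [Finset.sum_sub_distrib, Finset.sum_sub_distrib, Finset.sum_add_distrib] at this
      linear_combination this
    rw [map_neg]
    linear_combination hfin

/-- Rising factorial `a^{(k)} = a (a+1) ⋯ (a+k-1)` of a real number. -/
def risingFactorial (a : ℝ) : ℕ → ℝ
  | 0 => 1
  | k + 1 => risingFactorial a k * (a + k)

theorem stmt_12 (z a : ℝ) (hz : z ≠ 0) (ha : ∀ m : ℕ, a ≠ -(m : ℝ)) (d : ℕ) (hd : 1 ≤ d) :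
    ∃ q : Polynomial ℝ, ∀ n : ℕ,
      ∑ k ∈ Finset.range n,
          (((k : ℝ) ^ d -
              iteratedDeriv d
                (fun x : ℝ => Real.exp (1 / z - a * x - (1 / z) * Real.exp (-x))) 0) *
            z ^ k * risingFactorial a k) =
        q.eval (n : ℝ) * z ^ n * risingFactorial a n - q.eval 0 := by
  obtain ⟨q, hq⟩ := poly_main z a hz d
  rw [Tl_apply] at hq
  have hgd : iteratedDeriv d
      (fun x : ℝ => Real.exp (1 / z - a * x - (1 / z) * Real.exp (-x))) 0 = GG z a d := rfl
  refine ⟨q, ?_⟩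
  intro n
  induction n with
  | zero => simp [risingFactorial]
  | succ n ihn =>
    rw [Finset.sum_range_succ, ihn, hgd]
    have hev := congrArg (Polynomial.eval (n : ℝ)) hq
    simp only [eval_sub, eval_mul, eval_add, eval_C, eval_X, eval_comp, eval_pow,
      eval_one] at hev
    -- hev : z * (a + n) * q.eval (n+1) - q.eval n = n^d - GG z a d
    have hrf : risingFactorial a (n+1) = risingFactorial a n * (a + n) := rfl
    push_cast
    rw [hrf]
    linear_combination (-(z ^ n * risingFactorial a n)) * hev
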